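/- Let p, p' > 0, let A be a Hermitian n×n complex matrix, and let B_1, …, B_K be Hermitian n×n complex matrices such that |A ⊗ₖ 1 − 1 ⊗ₖ Aᵀ|^p = Σ_{k=1}^K |B_k ⊗ₖ 1 − 1 ⊗ₖ B_kᵀ|^{p'}. Then A commutes with B_k (A · B_k = B_k · A) for every k ∈ {1, …, K}. -/

import Mathlib

open Kronecker Matrix
open scoped ComplexOrder

section Aux

variable {n : ℕ}

lemma star_apply_of_isHermitian {m : Type*} [Fintype m] {C : Matrix m m ℂ}
    (hC : C.IsHermitian) (i j : m) : star (C i j) = C j i :=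
  hC.apply j i

lemma kron_one_mulVec (C : Matrix (Fin n) (Fin n) ℂ) (v : Fin n → ℂ) :
    (C ⊗ₖ (1 : Matrix (Fin n) (Fin n) ℂ)) *ᵥ (fun q : Fin n × Fin n => v q.1 * star (v q.2))
      = fun q => (C *ᵥ v) q.1 * star (v q.2) := by
  funext ⟨i, j⟩
  simp only [mulVec, dotProduct, Fintype.sum_prod_type, kroneckerMap_apply, one_apply,
    mul_ite, mul_one, mul_zero, ite_mul, zero_mul, Finset.sum_ite_eq, Finset.mem_univ, if_true]
  rw [Finset.sum_mul]
  exact Finset.sum_congr rfl fun k _ => by ring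

lemma one_kron_mulVec (C : Matrix (Fin n) (Fin n) ℂ) (hC : C.IsHermitian) (v : Fin n → ℂ) :
    ((1 : Matrix (Fin n) (Fin n) ℂ) ⊗ₖ Cᵀ) *ᵥ (fun q : Fin n × Fin n => v q.1 * star (v q.2))
      = fun q => v q.1 * star ((C *ᵥ v) q.2) := by
  funext ⟨i, j⟩
  have hR : v i * star ((C *ᵥ v) j) = ∑ l, C l j * (v i * star (v l)) := by
    simp only [mulVec, dotProduct, star_sum, star_mul', Finset.mul_sum]
    exact Finset.sum_congr rfl fun l _ => by rw [star_apply_of_isHermitian hC j l]; ring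
  show _ = v i * star ((C *ᵥ v) j)
  rw [hR]
  simp only [mulVec, dotProduct, Fintype.sum_prod_type, kroneckerMap_apply, one_apply,
    transpose_apply, ite_mul, one_mul, zero_mul]
  rw [Finset.sum_comm]
  refine Finset.sum_congr rfl fun l _ => ?_
  simp [Finset.sum_ite_eq, mul_comm, mul_assoc, mul_left_comm]

lemma kronDiff_mulVec (C : Matrix (Fin n) (Fin n) ℂ) (hC : C.IsHermitian) (v : Fin n → ℂ) :
    (C ⊗ₖ (1 : Matrix (Fin n) (Fin n) ℂ) - (1 : Matrix (Fin n) (Fin n) ℂ) ⊗ₖ Cᵀ) *ᵥ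
        (fun q : Fin n × Fin n => v q.1 * star (v q.2))
      = fun q => (C *ᵥ v) q.1 * star (v q.2) - v q.1 * star ((C *ᵥ v) q.2) := by
  rw [sub_mulVec, kron_one_mulVec, one_kron_mulVec C hC]
  rfl

lemma kronDiff_isHermitian {C : Matrix (Fin n) (Fin n) ℂ} (hC : C.IsHermitian) :
    (C ⊗ₖ (1 : Matrix (Fin n) (Fin n) ℂ) - (1 : Matrix (Fin n) (Fin n) ℂ) ⊗ₖ Cᵀ).IsHermitian := by
  apply IsHermitian.sub
  · show _ = _
    ext ⟨i, j⟩ ⟨k, l⟩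
    simp only [conjTranspose_apply, kroneckerMap_apply, one_apply, star_mul',
      apply_ite (star : ℂ → ℂ), star_one, star_zero, star_apply_of_isHermitian hC]
    simp [eq_comm]
  · show _ = _
    ext ⟨i, j⟩ ⟨k, l⟩
    simp only [conjTranspose_apply, kroneckerMap_apply, one_apply, transpose_apply, star_mul',
      apply_ite (star : ℂ → ℂ), star_one, star_zero, star_apply_of_isHermitian hC]
    simp [eq_comm]

lemma unitary_mulVec_eq_zero {m : Type*} [Fintype m] [DecidableEq m]
    {U : Matrix m m ℂ} (hU : U ∈ Matrix.unitaryGroup m ℂ) {x : m → ℂ}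
    (h : U *ᵥ x = 0) : x = 0 := by
  have h2 : star U *ᵥ (U *ᵥ x) = 0 := by rw [h, mulVec_zero]
  rwa [mulVec_mulVec, (mem_unitaryGroup_iff'.mp hU :), one_mulVec] at h2

lemma ker_cfc_iff {m : Type*} [Fintype m] [DecidableEq m] {M : Matrix m m ℂ}
    (hM : M.IsHermitian) {f : ℝ → ℝ} (hf : ∀ x : ℝ, f x = 0 ↔ x = 0) (w : m → ℂ) :
    cfc f M *ᵥ w = 0 ↔ M *ᵥ w = 0 := by
  have hU := (Matrix.IsHermitian.eigenvectorUnitary hM).2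
  set U : Matrix m m ℂ := (Matrix.IsHermitian.eigenvectorUnitary hM : Matrix m m ℂ) with hUdef
  have key : ∀ d : m → ℝ,
      (U * diagonal (RCLike.ofReal ∘ d) * star U) *ᵥ w = 0 ↔
        ∀ i, (d i : ℂ) * ((star U *ᵥ w) i) = 0 := by
    intro d
    rw [← mulVec_mulVec, ← mulVec_mulVec]
    constructor
    · intro h
      have h2 := unitary_mulVec_eq_zero hU h
      intro i
      have := congrFun h2 i
      rwa [mulVec_diagonal] at this
    · intro h
      have h2 : diagonal (RCLike.ofReal ∘ d) *ᵥ (star U *ᵥ w) = 0 := by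
        funext i
        rw [mulVec_diagonal]
        exact h i
      rw [h2, mulVec_zero]
  rw [hM.cfc_eq, Matrix.IsHermitian.cfc]
  have hfc : (RCLike.ofReal ∘ f ∘ hM.eigenvalues : m → ℂ)
      = RCLike.ofReal ∘ (fun i => f (hM.eigenvalues i)) := rfl
  rw [hfc, Unitary.conjStarAlgAut_apply, key]
  conv_rhs => rw [hM.spectral_theorem, Unitary.conjStarAlgAut_apply]
  have hec : (RCLike.ofReal ∘ hM.eigenvalues : m → ℂ)
      = RCLike.ofReal ∘ (fun i => hM.eigenvalues i) := rfl
  rw [hec, key]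
  constructor <;> intro h i <;> have hi := h i <;>
    rcases mul_eq_zero.mp hi with h0 | h0
  · rw [mul_eq_zero]
    left
    have : f (hM.eigenvalues i) = 0 := by exact_mod_cast h0
    exact_mod_cast (hf _).mp this
  · rw [mul_eq_zero]; right; exact h0
  · rw [mul_eq_zero]
    left
    have : hM.eigenvalues i = 0 := by exact_mod_cast h0
    exact_mod_cast (hf _).mpr this
  · rw [mul_eq_zero]; right; exact h0

lemma cfc_posSemidef {m : Type*} [Fintype m] [DecidableEq m] {M : Matrix m m ℂ}
    (hM : M.IsHermitian) {f : ℝ → ℝ} (hf : ∀ x : ℝ, 0 ≤ f x) :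
    (cfc f M).PosSemidef := by
  rw [hM.cfc_eq, Matrix.IsHermitian.cfc, Unitary.conjStarAlgAut_apply, Matrix.star_eq_conjTranspose]
  refine PosSemidef.mul_mul_conjTranspose_same ?_ _
  refine posSemidef_diagonal_iff.mpr fun i => ?_
  simpa using hf (hM.eigenvalues i)

end Aux

/-- `costOp p A` is the cost operator `|A ⊗ₖ 1 - 1 ⊗ₖ Aᵀ|^p`, where `|·|^p` is the
functional calculus applied with `x ↦ |x| ^ p` (real rpow). -/
noncomputable def costOp {n : ℕ} (p : ℝ) (A : Matrix (Fin n) (Fin n) ℂ) :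
    Matrix (Fin n × Fin n) (Fin n × Fin n) ℂ :=
  cfc (fun x : ℝ => |x| ^ p)
    (A ⊗ₖ (1 : Matrix (Fin n) (Fin n) ℂ) - (1 : Matrix (Fin n) (Fin n) ℂ) ⊗ₖ Aᵀ)

/-- If the `p`-cost operator of `A` decomposes as a sum of `p'`-cost operators of `B_k`,
then `A` commutes with every `B_k`. -/
theorem commutes_of_cost_decomposition {n : ℕ} (p p' : ℝ) (hp : 0 < p) (hp' : 0 < p')
    (K : ℕ) (A : Matrix (Fin n) (Fin n) ℂ) (hA : A.IsHermitian)
    (B : Fin K → Matrix (Fin n) (Fin n) ℂ) (hB : ∀ k, (B k).IsHermitian)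
    (h : costOp p A = ∑ k, costOp p' (B k)) :
    ∀ k, A * B k = B k * A := by
  intro k
  have hf : ∀ x : ℝ, |x| ^ p = 0 ↔ x = 0 := fun x => by
    rw [Real.rpow_eq_zero (abs_nonneg x) hp.ne', abs_eq_zero]
  have hf' : ∀ x : ℝ, |x| ^ p' = 0 ↔ x = 0 := fun x => by
    rw [Real.rpow_eq_zero (abs_nonneg x) hp'.ne', abs_eq_zero]
  have hMA := kronDiff_isHermitian hA
  have hPSD : ∀ k', (costOp p' (B k')).PosSemidef := fun k' =>
    cfc_posSemidef (kronDiff_isHermitian (hB k'))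
      (fun x => Real.rpow_nonneg (abs_nonneg x) p')
  -- every eigenvector of `A` is an eigenvector of `B k`
  have hev : ∀ j : Fin n, ∃ c : ℂ,
      B k *ᵥ ⇑(hA.eigenvectorBasis j) = c • ⇑(hA.eigenvectorBasis j) := by
    intro j
    set v : Fin n → ℂ := ⇑(hA.eigenvectorBasis j) with hv
    set w : Fin n × Fin n → ℂ := fun q => v q.1 * star (v q.2) with hw
    have hAv : A *ᵥ v = ((hA.eigenvalues j : ℝ) : ℂ) • v := by
      rw [hA.mulVec_eigenvectorBasis j]
      funext i
      simp only [Pi.smul_apply, Complex.real_smul, smul_eq_mul]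
      rfl
    have hMAw : (A ⊗ₖ (1 : Matrix (Fin n) (Fin n) ℂ)
        - (1 : Matrix (Fin n) (Fin n) ℂ) ⊗ₖ Aᵀ) *ᵥ w = 0 := by
      rw [hw, kronDiff_mulVec A hA v]
      funext q
      simp only [hAv, Pi.smul_apply, smul_eq_mul, star_mul', Complex.star_def,
        Complex.conj_ofReal, Pi.zero_apply]
      ring
    have hcost : costOp p A *ᵥ w = 0 := by
      rw [costOp]
      exact (ker_cfc_iff hMA hf w).mpr hMAw
    have hsumeq : (∑ k', costOp p' (B k')) *ᵥ w = ∑ k', costOp p' (B k') *ᵥ w := by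
      funext i
      simp only [mulVec, dotProduct, Finset.sum_apply, Matrix.sum_apply, Finset.sum_mul]
      exact Finset.sum_comm
    have hsum0 : ∑ k', costOp p' (B k') *ᵥ w = 0 := by
      rw [← hsumeq, ← h, hcost]
    have hterms : ∑ k', star w ⬝ᵥ (costOp p' (B k') *ᵥ w) = 0 := by
      have : star w ⬝ᵥ (∑ k', costOp p' (B k') *ᵥ w)
          = ∑ k', star w ⬝ᵥ (costOp p' (B k') *ᵥ w) := by
        simp only [dotProduct, Finset.sum_apply, Finset.mul_sum]
        exact Finset.sum_comm
      rw [← this, hsum0, dotProduct_zero]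
    have hterm : star w ⬝ᵥ (costOp p' (B k) *ᵥ w) = 0 :=
      (Finset.sum_eq_zero_iff_of_nonneg (fun k' _ => (hPSD k').dotProduct_mulVec_nonneg w)).mp hterms k
        (Finset.mem_univ k)
    have hNw : costOp p' (B k) *ᵥ w = 0 := ((hPSD k).dotProduct_mulVec_zero_iff w).mp hterm
    have hMBw : (B k ⊗ₖ (1 : Matrix (Fin n) (Fin n) ℂ)
        - (1 : Matrix (Fin n) (Fin n) ℂ) ⊗ₖ (B k)ᵀ) *ᵥ w = 0 := by
      refine (ker_cfc_iff (kronDiff_isHermitian (hB k)) hf' w).mp ?_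
      rw [← costOp]
      exact hNw
    rw [hw, kronDiff_mulVec (B k) (hB k) v] at hMBw
    have hvne : ∃ i, v i ≠ 0 := by
      by_contra hcon
      push_neg at hcon
      have hz : hA.eigenvectorBasis j = 0 := by
        ext i
        exact hcon i
      exact hA.eigenvectorBasis.orthonormal.ne_zero j hz
    obtain ⟨j0, hj0⟩ := hvne
    have hstar : star (v j0) ≠ 0 := star_ne_zero.mpr hj0
    refine ⟨star ((B k *ᵥ v) j0) * (star (v j0))⁻¹, ?_⟩
    funext i
    have hij := congrFun hMBw (i, j0)
    simp only [Pi.zero_apply] at hij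
    have hij' := sub_eq_zero.mp hij
    simp only [Pi.smul_apply, smul_eq_mul]
    have hkey : (B k *ᵥ v) i = v i * star ((B k *ᵥ v) j0) * (star (v j0))⁻¹ := by
      rw [← hij', mul_assoc, mul_inv_cancel₀ hstar, mul_one]
    rw [hkey]
    ring
  choose c hc using hev
  set U : Matrix (Fin n) (Fin n) ℂ :=
    ((Matrix.IsHermitian.eigenvectorUnitary hA : Matrix.unitaryGroup (Fin n) ℂ) :
      Matrix (Fin n) (Fin n) ℂ) with hUdef
  have hUU : U * star U = 1 :=
    mem_unitaryGroup_iff.mp (Matrix.IsHermitian.eigenvectorUnitary hA).2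
  have hcols : ∀ (M : Matrix (Fin n) (Fin n) ℂ) (i j : Fin n),
      (M * U) i j = (M *ᵥ ⇑(hA.eigenvectorBasis j)) i := by
    intro M i j
    simp [hUdef, mul_apply, mulVec, dotProduct,
      Matrix.IsHermitian.eigenvectorUnitary_apply]
  have hcancel : (A * B k) * U = (B k * A) * U := by
    ext i j
    rw [hcols, hcols]
    rw [← mulVec_mulVec, ← mulVec_mulVec, hc j, mulVec_smul,
      hA.mulVec_eigenvectorBasis j, mulVec_smul, hc j]
    rw [smul_comm]
  calc A * B k = (A * B k) * (U * star U) := by rw [hUU, mul_one]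
    _ = ((A * B k) * U) * star U := (mul_assoc _ U (star U)).symm
    _ = ((B k * A) * U) * star U := by rw [hcancel]
    _ = (B k * A) * (U * star U) := mul_assoc _ U (star U)
    _ = B k * A := by rw [hUU, mul_one]
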